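/- Suppose Conditions (A1')–(A4') hold, p0(i) > 0 for all i, and p0 ∉ Γ. Then there exists ζ > 0 such that the minimizer map q ↦ g(q) is smooth on the ball B(p0, ζ), and for all q ∈ B(p0, ζ) and every i ∈ X it satisfies the identity Σ_{j=1}^d (q(j)/g_j(q)) · ∂g_j(q)/∂q(i) = 0. -/

import Mathlib

set_option maxHeartbeats 1000000

open Set Metric

noncomputable section

lemma clm_sum_single {d : ℕ} (L : (Fin d → ℝ) →L[ℝ] ℝ) (v : Fin d → ℝ) :
    L v = ∑ j, v j * L (Pi.single j 1) := by
  have h : v = ∑ j, (v j) • (Pi.single j 1 : Fin d → ℝ) := by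
    funext k
    simp [Finset.sum_apply, Pi.single_apply]
  conv_lhs => rw [h]
  rw [map_sum]
  simp [smul_eq_mul]

lemma gibbs_strict {d : ℕ} (p γ : Fin d → ℝ) (hp : ∀ i, 0 < p i) (hγ : ∀ i, 0 < γ i)
    (hps : ∑ i, p i = 1) (hγs : ∑ i, γ i = 1) (hne : γ ≠ p) :
    0 < ∑ i, p i * Real.log (p i / γ i) := by
  obtain ⟨k, hk⟩ : ∃ k, γ k ≠ p k := by
    by_contra h
    push_neg at h
    exact hne (funext h)
  have key : ∑ i, p i * Real.log (γ i / p i) < ∑ i, (γ i - p i) := by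
    have hle : ∀ i ∈ Finset.univ, p i * Real.log (γ i / p i) ≤ γ i - p i := by
      intro i _
      have h1 : Real.log (γ i / p i) ≤ γ i / p i - 1 :=
        Real.log_le_sub_one_of_pos (div_pos (hγ i) (hp i))
      have h2 := mul_le_mul_of_nonneg_left h1 (hp i).le
      calc p i * Real.log (γ i / p i) ≤ p i * (γ i / p i - 1) := h2
        _ = γ i - p i := by rw [mul_sub, mul_one, mul_div_cancel₀ _ (hp i).ne']
    have hlt : p k * Real.log (γ k / p k) < γ k - p k := by
      have h1 : Real.log (γ k / p k) < γ k / p k - 1 :=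
        Real.log_lt_sub_one_of_pos (div_pos (hγ k) (hp k))
          (by
            rw [Ne, div_eq_one_iff_eq (hp k).ne']
            exact hk)
      have h2 := mul_lt_mul_of_pos_left h1 (hp k)
      calc p k * Real.log (γ k / p k) < p k * (γ k / p k - 1) := h2
        _ = γ k - p k := by rw [mul_sub, mul_one, mul_div_cancel₀ _ (hp k).ne']
    exact Finset.sum_lt_sum hle ⟨k, Finset.mem_univ k, hlt⟩
  have hzero : ∑ i, (γ i - p i) = 0 := by
    rw [Finset.sum_sub_distrib, hps, hγs]; ring
  have heq : ∑ i, p i * Real.log (p i / γ i) = -∑ i, p i * Real.log (γ i / p i) := by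
    rw [← Finset.sum_neg_distrib]
    apply Finset.sum_congr rfl
    intro i _
    rw [Real.log_div (hp i).ne' (hγ i).ne', Real.log_div (hγ i).ne' (hp i).ne']
    ring
  rw [heq]
  linarith [key, hzero]

lemma convexOn_grad_le {E : Type*} [NormedAddCommGroup E] [NormedSpace ℝ E]
    {F : E → ℝ} (hF : ConvexOn ℝ Set.univ F) {x : E} {f' : E →L[ℝ] ℝ}
    (hf : HasFDerivAt F f' x) (v : E) : f' v ≤ F (x + v) - F x := by
  have hA : (fun t : ℝ => F (x + t • v)) = F ∘ (AffineMap.lineMap x (x + v)) := by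
    funext t
    simp [AffineMap.lineMap_apply, add_comm]
  have hline : ConvexOn ℝ Set.univ (fun t : ℝ => F (x + t • v)) := by
    rw [hA]
    have := hF.comp_affineMap (AffineMap.lineMap x (x + v))
    simpa using this
  have hc : HasDerivAt (fun t : ℝ => x + t • v) v 0 := by
    simpa using ((hasDerivAt_id (0:ℝ)).smul_const v).const_add x
  have hd : HasDerivAt (fun t : ℝ => F (x + t • v)) (f' v) 0 := by
    have hf0 : HasFDerivAt F f' ((fun t : ℝ => x + t • v) 0) := by simpa using hf
    have := hf0.comp_hasDerivAt 0 hc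
    exact this
  have hslope := hline.le_slope_of_hasDerivAt (mem_univ (0:ℝ)) (mem_univ (1:ℝ)) one_pos hd
  have hs : slope (fun t : ℝ => F (x + t • v)) 0 1 = F (x + v) - F x := by
    simp [slope_def_field]
  rw [hs] at hslope
  exact hslope

lemma phi_hasFDerivAt {d : ℕ} (p : Fin d → ℝ) (hp : ∀ i, 0 < p i)
    (x : Fin d → ℝ) (hx : ∀ i, 0 < x i) :
    HasFDerivAt (fun γ : Fin d → ℝ => ∑ i, p i * Real.log (p i / γ i))
      (∑ j, (-(p j / x j)) • (ContinuousLinearMap.proj j :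
          (Fin d → ℝ) →L[ℝ] ℝ)) x := by
  have hterm : ∀ j : Fin d, HasFDerivAt (fun γ : Fin d → ℝ => p j * Real.log (p j / γ j))
      ((-(p j / x j)) • (ContinuousLinearMap.proj j : (Fin d → ℝ) →L[ℝ] ℝ)) x := by
    intro j
    have h2 : HasFDerivAt (fun γ : Fin d → ℝ => Real.log (γ j))
        ((x j)⁻¹ • (ContinuousLinearMap.proj j : (Fin d → ℝ) →L[ℝ] ℝ)) x := by
      have hproj : HasFDerivAt (fun γ : Fin d → ℝ => γ j)
          (ContinuousLinearMap.proj j : (Fin d → ℝ) →L[ℝ] ℝ) x :=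
        (ContinuousLinearMap.proj j : (Fin d → ℝ) →L[ℝ] ℝ).hasFDerivAt
      exact (Real.hasDerivAt_log (hx j).ne').comp_hasFDerivAt x hproj
    have h3 := (h2.const_sub (Real.log (p j))).const_mul (p j)
    have h4 : HasFDerivAt (fun γ : Fin d → ℝ => p j * (Real.log (p j) - Real.log (γ j)))
        ((-(p j / x j)) • (ContinuousLinearMap.proj j : (Fin d → ℝ) →L[ℝ] ℝ)) x := by
      refine h3.congr_fderiv ?_
      ext v
      simp [div_eq_mul_inv]
      ring
    apply h4.congr_of_eventuallyEq
    have hopen : IsOpen {γ : Fin d → ℝ | 0 < γ j} :=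
      isOpen_lt continuous_const (continuous_apply j)
    filter_upwards [hopen.mem_nhds (hx j)] with γ hγ
    rw [Real.log_div (hp j).ne' (ne_of_gt hγ)]
  exact HasFDerivAt.fun_sum (fun j _ => hterm j)

lemma det_ne_zero_of_bijective {E : Type*} [NormedAddCommGroup E] [NormedSpace ℝ E]
    [FiniteDimensional ℝ E] (f : E →L[ℝ] E) (h : Function.Bijective f) : f.det ≠ 0 := by
  have hb : Function.Bijective (f : E →ₗ[ℝ] E) := h
  have h1 : IsUnit (LinearMap.det ((LinearEquiv.ofBijective (f : E →ₗ[ℝ] E) hb) :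
      E →ₗ[ℝ] E)) := LinearEquiv.isUnit_det' _
  have h2 : ((LinearEquiv.ofBijective (f : E →ₗ[ℝ] E) hb) : E →ₗ[ℝ] E) = (f : E →ₗ[ℝ] E) := by
    ext x; rfl
  rw [h2] at h1
  exact isUnit_iff_ne_zero.mp h1

/-- The Karush--Kuhn--Tucker map associated to the optimization problem
`min Σ_i q i log (p0 i / γ i)` subject to `Σ_i γ i = 1`, `F γ ≤ 0`:
`(γ, λ, μ) ↦ ((λ γ_i + μ γ_i ∂F(γ)/∂γ_i)_i, Σ_i γ_i, F γ)`.
The stationarity condition reads `q i = λ γ_i + μ γ_i ∂F(γ)/∂γ_i`. -/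
def kktMap {d : ℕ} (F : (Fin d → ℝ) → ℝ) :
    ((Fin d → ℝ) × ℝ × ℝ) → ((Fin d → ℝ) × ℝ × ℝ) := fun x =>
  (fun i => x.2.1 * x.1 i + x.2.2 * x.1 i * fderiv ℝ F x.1 (Pi.single i 1),
    ∑ i, x.1 i, F x.1)

/-- **Smoothness of the minimizer map and the derivative identity (Lemma
`property`, part (i)).**  Under Conditions (A1')--(A4') (the last one expressed as
nonsingularity of the Jacobian of the first-order optimality (KKT) system at
`q = p0`), with `p0` a strictly positive pmf not in `Γ`, there exist `ζ > 0` and a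
map `g`, smooth on the ball `B(p0, ζ)`, which assigns to each pmf `q ∈ B(p0, ζ)`
the unique minimizer of `γ ↦ Σ_i q i log (p0 i / γ i)` over `Γ`, and which
satisfies `Σ_j (q j / g_j(q)) ∂g_j(q)/∂q_i = 0` for every such `q` and every
`i`. -/
lemma kktMap_contDiffOn {d : ℕ} {F : (Fin d → ℝ) → ℝ} {γ' : Fin d → ℝ} {η : ℝ}
    (hFsmooth : ContDiffOn ℝ (⊤ : ℕ∞) F (Metric.ball γ' η)) :
    ContDiffOn ℝ (⊤ : ℕ∞) (kktMap F) {x : (Fin d → ℝ) × ℝ × ℝ | x.1 ∈ Metric.ball γ' η} := by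
  have htop : ((⊤:ℕ∞) : WithTop ℕ∞) + 1 ≤ ((⊤:ℕ∞) : WithTop ℕ∞) := by
    exact_mod_cast le_refl _
  set O : Set ((Fin d → ℝ) × ℝ × ℝ) := {x | x.1 ∈ Metric.ball γ' η} with hOdef
  have hD : ContDiffOn ℝ (⊤:ℕ∞) (fderiv ℝ F) (Metric.ball γ' η) :=
    hFsmooth.fderiv_of_isOpen isOpen_ball htop
  have hmap : Set.MapsTo (fun x : (Fin d → ℝ) × ℝ × ℝ => x.1) O (Metric.ball γ' η) :=
    fun x hx => hx
  have hfst : ContDiffOn ℝ (⊤:ℕ∞) (fun x : (Fin d → ℝ) × ℝ × ℝ => x.1) O :=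
    contDiff_fst.contDiffOn
  have hDO : ContDiffOn ℝ (⊤:ℕ∞) (fun x : (Fin d → ℝ) × ℝ × ℝ => fderiv ℝ F x.1) O :=
    hD.comp hfst hmap
  have hx1i : ∀ i : Fin d, ContDiff ℝ (⊤:ℕ∞) (fun x : (Fin d → ℝ) × ℝ × ℝ => x.1 i) :=
    fun i => ((ContinuousLinearMap.proj i : (Fin d → ℝ) →L[ℝ] ℝ).contDiff).comp contDiff_fst
  apply ContDiffOn.prodMk
  · apply contDiffOn_pi.2
    intro i
    apply ContDiffOn.add
    · exact ((contDiff_fst.comp contDiff_snd).mul (hx1i i)).contDiffOn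
    · apply ContDiffOn.mul
      · exact ((contDiff_snd.comp contDiff_snd).mul (hx1i i)).contDiffOn
      · exact hDO.clm_apply contDiffOn_const
  · apply ContDiffOn.prodMk
    · exact (ContDiff.sum (fun i (_ : i ∈ Finset.univ) => hx1i i)).contDiffOn
    · exact hFsmooth.comp hfst hmap

theorem minimizer_map_smooth {d : ℕ} (p0 : Fin d → ℝ) (F : (Fin d → ℝ) → ℝ)
    (Γ : Set (Fin d → ℝ))
    (hp0 : p0 ∈ stdSimplex ℝ (Fin d)) (hp0pos : ∀ i, 0 < p0 i)
    -- (A1')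
    (hFconv : ConvexOn ℝ Set.univ F) (hFcont : Continuous F)
    (hΓ : Γ = {γ ∈ stdSimplex ℝ (Fin d) | F γ ≤ 0})
    (hΓne : Γ.Nonempty) (hp0notin : p0 ∉ Γ)
    -- (A2')
    (c0 : ℝ) (hc0 : 0 < c0) (hΓpos : ∀ γ ∈ Γ, ∀ i, c0 ≤ γ i)
    -- (A3')
    (γ' : Fin d → ℝ) (hγ'mem : γ' ∈ Γ)
    (hγ'min : IsMinOn (fun γ => ∑ i, p0 i * Real.log (p0 i / γ i)) Γ γ')
    (η : ℝ) (hη : 0 < η) (hFsmooth : ContDiffOn ℝ (⊤ : ℕ∞) F (Metric.ball γ' η))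
    -- (A4')
    (hA4 : ∃ lam mu : ℝ,
      (∀ i, p0 i = lam * γ' i + mu * γ' i * fderiv ℝ F γ' (Pi.single i 1)) ∧
      Function.Bijective (fderiv ℝ (kktMap F) (γ', lam, mu))) :
    ∃ ζ > 0, ∃ g : (Fin d → ℝ) → (Fin d → ℝ),
      ContDiffOn ℝ (⊤ : ℕ∞) g (Metric.ball p0 ζ) ∧
      (∀ q ∈ Metric.ball p0 ζ ∩ stdSimplex ℝ (Fin d), q ∉ Γ) ∧
      (∀ q ∈ Metric.ball p0 ζ ∩ stdSimplex ℝ (Fin d),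
        g q ∈ Γ ∧ IsMinOn (fun γ => ∑ i, q i * Real.log (p0 i / γ i)) Γ (g q)) ∧
      (∀ q ∈ Metric.ball p0 ζ ∩ stdSimplex ℝ (Fin d), ∀ i : Fin d,
        ∑ j, (q j / g q j) * fderiv ℝ (fun q' => g q' j) q (Pi.single i 1) = 0) := by
  classical
  obtain ⟨lam, mu, hstat, hbij⟩ := hA4
  have hone : (1 : WithTop ℕ∞) ≤ ((⊤:ℕ∞) : WithTop ℕ∞) := by exact_mod_cast le_top
  have htop' : ((⊤:ℕ∞) : WithTop ℕ∞) + 1 ≤ ((⊤:ℕ∞) : WithTop ℕ∞) := by exact_mod_cast le_refl _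
  have hγ'sim : γ' ∈ stdSimplex ℝ (Fin d) := by
    have h := hγ'mem; rw [hΓ] at h; exact h.1
  have hFγ'le : F γ' ≤ 0 := by
    have h := hγ'mem; rw [hΓ] at h; exact h.2
  have hγ'memΓ : γ' ∈ Γ := hγ'mem
  have hγ'pos : ∀ i, 0 < γ' i := fun i => lt_of_lt_of_le hc0 (hΓpos γ' hγ'memΓ i)
  have hγ'sum : ∑ i, γ' i = 1 := hγ'sim.2
  have hp0sum : ∑ i, p0 i = 1 := hp0.2
  have hγ'ne : γ' ≠ p0 := fun h => hp0notin (h ▸ hγ'memΓ)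
  have hΓconv : Convex ℝ Γ := by
    rw [hΓ, show {γ ∈ stdSimplex ℝ (Fin d) | F γ ≤ 0}
        = stdSimplex ℝ (Fin d) ∩ {x ∈ Set.univ | F x ≤ 0} by ext z; simp]
    exact (convex_stdSimplex ℝ (Fin d)).inter (hFconv.convex_le 0)
  have hΓclosed : IsClosed Γ := by
    rw [hΓ, show {γ ∈ stdSimplex ℝ (Fin d) | F γ ≤ 0}
        = stdSimplex ℝ (Fin d) ∩ F ⁻¹' (Set.Iic 0) by ext z; simp [Set.mem_preimage]]
    exact (isClosed_stdSimplex ℝ (Fin d)).inter (isClosed_Iic.preimage hFcont)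
  -- F γ' = 0
  have hFγ'0 : F γ' = 0 := by
    by_contra hne0
    have hlt : F γ' < 0 := lt_of_le_of_ne hFγ'le hne0
    set h : ℝ → ℝ := fun t => F ((1 - t) • γ' + t • p0) with hhdef
    have hhc : Continuous h := by
      apply hFcont.comp
      exact ((continuous_const.sub continuous_id).smul continuous_const).add
        (continuous_id.smul continuous_const)
    have hh0 : h 0 < 0 := by
      simpa [hhdef] using hlt
    have hev : ∀ᶠ t in nhds (0:ℝ), h t < 0 :=
      (hhc.continuousAt).eventually_lt continuousAt_const hh0
    obtain ⟨ε, hεpos, hε⟩ := Metric.eventually_nhds_iff.mp hev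
    set t0 : ℝ := min (ε / 2) (1 / 2) with ht0def
    have ht0pos : 0 < t0 := lt_min (by linarith) (by norm_num)
    have ht0half : t0 ≤ 1 / 2 := min_le_right _ _
    have ht0eps : dist t0 (0:ℝ) < ε := by
      rw [Real.dist_eq, sub_zero, abs_of_pos ht0pos]
      calc t0 ≤ ε / 2 := min_le_left _ _
        _ < ε := by linarith
    have hFt0 : h t0 < 0 := hε ht0eps
    set γt : Fin d → ℝ := (1 - t0) • γ' + t0 • p0 with hγtdef
    have hγtsim : γt ∈ stdSimplex ℝ (Fin d) :=
      convex_stdSimplex ℝ (Fin d) hγ'sim hp0 (by linarith) (by linarith) (by ring)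
    have hγtΓ : γt ∈ Γ := by
      rw [hΓ]
      exact ⟨hγtsim, hFt0.le⟩
    have hγtpos : ∀ i, 0 < γt i := by
      intro i
      have h1 : 0 < (1 - t0) * γ' i := by
        apply mul_pos (by linarith) (hγ'pos i)
      have h2 : 0 ≤ t0 * p0 i := mul_nonneg ht0pos.le (hp0pos i).le
      simpa [hγtdef, Pi.add_apply, Pi.smul_apply, smul_eq_mul] using by linarith
    -- concavity of log
    have hlog : ∀ i, (1 - t0) * Real.log (γ' i) + t0 * Real.log (p0 i)
        ≤ Real.log (γt i) := by
      intro i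
      have := (strictConcaveOn_log_Ioi.concaveOn).2 (Set.mem_Ioi.mpr (hγ'pos i))
        (Set.mem_Ioi.mpr (hp0pos i)) (by linarith : (0:ℝ) ≤ 1 - t0) ht0pos.le (by ring)
      simpa [hγtdef, Pi.add_apply, Pi.smul_apply, smul_eq_mul] using this
    have hphi_le : ∑ i, p0 i * Real.log (p0 i / γt i)
        ≤ (1 - t0) * ∑ i, p0 i * Real.log (p0 i / γ' i) := by
      have hterm : ∀ i ∈ Finset.univ, p0 i * Real.log (p0 i / γt i)
          ≤ (1 - t0) * (p0 i * Real.log (p0 i / γ' i)) := by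
        intro i _
        rw [Real.log_div (hp0pos i).ne' (hγtpos i).ne',
          Real.log_div (hp0pos i).ne' (hγ'pos i).ne']
        have h1 := hlog i
        nlinarith [hp0pos i, hlog i]
      calc ∑ i, p0 i * Real.log (p0 i / γt i)
          ≤ ∑ i, (1 - t0) * (p0 i * Real.log (p0 i / γ' i)) := Finset.sum_le_sum hterm
        _ = (1 - t0) * ∑ i, p0 i * Real.log (p0 i / γ' i) := by rw [Finset.mul_sum]
    have hmin := isMinOn_iff.mp hγ'min γt hγtΓ
    have hgibbs := gibbs_strict p0 γ' hp0pos hγ'pos hp0sum hγ'sum hγ'ne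
    nlinarith [hmin, hphi_le, hgibbs, ht0pos]
  -- kkt smoothness
  set O : Set ((Fin d → ℝ) × ℝ × ℝ) := {x | x.1 ∈ Metric.ball γ' η} with hOdef
  have hO : IsOpen O := isOpen_ball.preimage continuous_fst
  have hkkt : ContDiffOn ℝ (⊤:ℕ∞) (kktMap F) O := kktMap_contDiffOn hFsmooth
  set x0 : (Fin d → ℝ) × ℝ × ℝ := (γ', lam, mu) with hx0def
  have hx0O : x0 ∈ O := mem_ball_self hη
  have hkktx0 : ContDiffAt ℝ (⊤:ℕ∞) (kktMap F) x0 := hkkt.contDiffAt (hO.mem_nhds hx0O)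
  have hdet0 : (fderiv ℝ (kktMap F) x0).det ≠ 0 := det_ne_zero_of_bijective _ hbij
  set e0 := (fderiv ℝ (kktMap F) x0).toContinuousLinearEquivOfDetNeZero hdet0 with he0def
  have hstrict : HasStrictFDerivAt (kktMap F)
      (e0 : ((Fin d → ℝ) × ℝ × ℝ) →L[ℝ] ((Fin d → ℝ) × ℝ × ℝ)) x0 := by
    rw [he0def, ContinuousLinearMap.coe_toContinuousLinearEquivOfDetNeZero]
    exact hkktx0.hasStrictFDerivAt (by simp)
  set P := hstrict.toOpenPartialHomeomorph (kktMap F) with hPdef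
  have hPcoe : ⇑P = kktMap F := hstrict.toOpenPartialHomeomorph_coe
  have hx0src : x0 ∈ P.source := hstrict.mem_toOpenPartialHomeomorph_source
  have hy0tgt : kktMap F x0 ∈ P.target := by
    have := P.map_source hx0src
    rwa [hPcoe] at this
  have hsymmx0 : P.symm (kktMap F x0) = x0 := by
    have := P.left_inv hx0src
    rwa [hPcoe] at this
  have hrinv : ∀ y ∈ P.target, kktMap F (P.symm y) = y := by
    intro y hy
    have := P.right_inv hy
    rwa [hPcoe] at this
  have hy0 : kktMap F x0 = (p0, (1:ℝ), (0:ℝ)) := by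
    refine Prod.ext ?_ (Prod.ext ?_ ?_)
    · funext i
      exact (hstat i).symm
    · exact hγ'sum
    · exact hFγ'0
  -- mu > 0
  have hmupos : 0 < mu := by
    have hFd : HasFDerivAt F (fderiv ℝ F γ') γ' :=
      ((hFsmooth.contDiffAt (isOpen_ball.mem_nhds (mem_ball_self hη))).differentiableAt
        (by simp)).hasFDerivAt
    rcases lt_trichotomy mu 0 with hneg | h0 | hpos
    · exfalso
      have hratio : ∀ j, p0 j / γ' j = lam + mu * fderiv ℝ F γ' (Pi.single j 1) := by
        intro j
        rw [hstat j, div_eq_iff (hγ'pos j).ne']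
        ring
      have hall : ∀ γ ∈ Γ, F γ = 0 := by
        intro γ hγmem
        have hγsim : γ ∈ stdSimplex ℝ (Fin d) := by
          have h := hγmem; rw [hΓ] at h; exact h.1
        have hγle : F γ ≤ 0 := by
          have h := hγmem; rw [hΓ] at h; exact h.2
        have hphi := phi_hasFDerivAt p0 hp0pos γ' hγ'pos
        have htan : γ - γ' ∈ posTangentConeAt Γ γ' :=
          sub_mem_posTangentConeAt_of_segment_subset (hΓconv.segment_subset hγ'memΓ hγmem)
        have hnn := hγ'min.localize.hasFDerivWithinAt_nonneg hphi.hasFDerivWithinAt htan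
        have hsum0 : ∑ j, (γ j - γ' j) = 0 := by
          rw [Finset.sum_sub_distrib, hγsim.2, hγ'sum]; ring
        have hexp : fderiv ℝ F γ' (γ - γ')
            = ∑ j, (γ j - γ' j) * fderiv ℝ F γ' (Pi.single j 1) := by
          rw [clm_sum_single (fderiv ℝ F γ') (γ - γ')]
          exact Finset.sum_congr rfl (fun j _ => by rw [Pi.sub_apply])
        have hval : (∑ j, (-(p0 j / γ' j)) • (ContinuousLinearMap.proj j :
            (Fin d → ℝ) →L[ℝ] ℝ)) (γ - γ')
            = -(mu * (fderiv ℝ F γ' (γ - γ'))) := by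
          rw [ContinuousLinearMap.sum_apply, hexp]
          have h1 : ∀ j ∈ Finset.univ, ((-(p0 j / γ' j)) • (ContinuousLinearMap.proj j :
              (Fin d → ℝ) →L[ℝ] ℝ)) (γ - γ')
              = -(lam * (γ j - γ' j)) + -(mu * ((γ j - γ' j)
                * fderiv ℝ F γ' (Pi.single j 1))) := by
            intro j _
            rw [ContinuousLinearMap.smul_apply]
            simp only [ContinuousLinearMap.proj_apply, Pi.sub_apply, smul_eq_mul]
            rw [hratio j]
            ring
          rw [Finset.sum_congr rfl h1, Finset.sum_add_distrib, Finset.sum_neg_distrib,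
            Finset.sum_neg_distrib, ← Finset.mul_sum, ← Finset.mul_sum, hsum0]
          ring
        rw [hval] at hnn
        have hA : 0 ≤ fderiv ℝ F γ' (γ - γ') := by nlinarith
        have hub := convexOn_grad_le hFconv hFd (γ - γ')
        rw [show γ' + (γ - γ') = γ by ring, hFγ'0] at hub
        linarith
      -- a point of Γ with negative value of F
      have hcont2 : Continuous (fun s : ℝ => ((p0, (1:ℝ), s) : (Fin d → ℝ) × ℝ × ℝ)) :=
        continuous_const.prodMk (continuous_const.prodMk continuous_id)
      have h0tgt : ((p0, (1:ℝ), (0:ℝ)) : (Fin d → ℝ) × ℝ × ℝ) ∈ P.target := hy0 ▸ hy0tgt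
      have hψ0 : P.symm ((p0, (1:ℝ), (0:ℝ)) : (Fin d → ℝ) × ℝ × ℝ) = x0 := by
        rw [← hy0]; exact hsymmx0
      have hcsym : ContinuousAt (fun s : ℝ => P.symm ((p0, (1:ℝ), s) :
          (Fin d → ℝ) × ℝ × ℝ)) 0 := by
        apply ContinuousAt.comp
        · have := P.symm.continuousAt (x := ((p0, (1:ℝ), (0:ℝ)) : (Fin d → ℝ) × ℝ × ℝ))
            (by rw [P.symm_source]; exact h0tgt)
          exact this
        · exact hcont2.continuousAt
      have h1 : ∀ᶠ s in nhds (0:ℝ), ((p0, (1:ℝ), s) : (Fin d → ℝ) × ℝ × ℝ) ∈ P.target :=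
        hcont2.continuousAt.preimage_mem_nhds (P.open_target.mem_nhds h0tgt)
      have h2 : ∀ᶠ s in nhds (0:ℝ), P.symm ((p0, (1:ℝ), s) : (Fin d → ℝ) × ℝ × ℝ)
          ∈ Metric.ball x0 (c0 / 2) := by
        have hball : Metric.ball x0 (c0 / 2) ∈ nhds (P.symm ((p0, (1:ℝ), (0:ℝ)) :
            (Fin d → ℝ) × ℝ × ℝ)) := by
          rw [hψ0]
          exact Metric.ball_mem_nhds _ (by positivity)
        exact hcsym hball
      obtain ⟨ε, hεpos, hε⟩ := Metric.eventually_nhds_iff.mp (h1.and h2)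
      set s0 : ℝ := -(ε / 2) with hs0def
      have hs0neg : s0 < 0 := by rw [hs0def]; linarith
      have hs0dist : dist s0 (0:ℝ) < ε := by
        rw [Real.dist_eq, sub_zero, hs0def, abs_neg, abs_of_pos (by linarith : (0:ℝ) < ε/2)]
        linarith
      obtain ⟨hst, hsb⟩ := hε hs0dist
      set xs := P.symm ((p0, (1:ℝ), s0) : (Fin d → ℝ) × ℝ × ℝ) with hxsdef
      have hks : kktMap F xs = (p0, (1:ℝ), s0) := hrinv _ hst
      have hsum1 : ∑ i, xs.1 i = 1 := congrArg (fun z => z.2.1) hks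
      have hFs : F xs.1 = s0 := congrArg (fun z => z.2.2) hks
      have hpos : ∀ i, 0 < xs.1 i := by
        intro i
        have hd1 : dist xs.1 γ' ≤ dist xs x0 := by
          rw [Prod.dist_eq]
          exact le_max_left _ _
        have hd2 : dist (xs.1 i) (γ' i) ≤ dist xs.1 γ' := dist_le_pi_dist _ _ i
        have hd3 : dist (xs.1 i) (γ' i) < c0 / 2 :=
          lt_of_le_of_lt (hd2.trans hd1) (Metric.mem_ball.mp hsb)
        rw [Real.dist_eq, abs_lt] at hd3
        have := hγ'pos i
        have := hΓpos γ' hγ'memΓ i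
        linarith [hd3.1]
      have hxsΓ : xs.1 ∈ Γ := by
        rw [hΓ]
        exact ⟨⟨fun i => (hpos i).le, hsum1⟩, by rw [hFs]; exact hs0neg.le⟩
      have := hall xs.1 hxsΓ
      rw [hFs] at this
      linarith
    · exfalso
      apply hp0notin
      have hlam : lam = 1 := by
        have h1 : ∑ i, p0 i = ∑ i, lam * γ' i :=
          Finset.sum_congr rfl (fun i _ => by rw [hstat i, h0]; ring)
        rw [hp0sum, ← Finset.mul_sum, hγ'sum, mul_one] at h1
        exact h1.symm
      have hpe : p0 = γ' := by
        funext i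
        rw [hstat i, h0, hlam]; ring
      rw [hpe]; exact hγ'memΓ
    · exact hpos
  -- the open set of good points
  set ρ : ℝ := min η c0 / 2 with hρdef
  have hρpos : 0 < ρ := by positivity
  have hρη : ρ < η := by
    rw [hρdef]
    have : min η c0 ≤ η := min_le_left _ _
    linarith
  have hρc0 : ρ ≤ c0 / 2 := by
    rw [hρdef]
    have : min η c0 ≤ c0 := min_le_right _ _
    linarith
  set W : Set ((Fin d → ℝ) × ℝ × ℝ) :=
    ({x | x.1 ∈ Metric.ball γ' ρ} ∩ (fun x => (fderiv ℝ (kktMap F) x).det) ⁻¹' {(0:ℝ)}ᶜ)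
      ∩ {x | 0 < x.2.2} with hWdef
  have hWsubO : ({x : (Fin d → ℝ) × ℝ × ℝ | x.1 ∈ Metric.ball γ' ρ}) ⊆ O := by
    intro x hx
    exact Metric.ball_subset_ball hρη.le hx
  have hWopen : IsOpen W := by
    apply IsOpen.inter
    · apply ContinuousOn.isOpen_inter_preimage
      · exact ContinuousLinearMap.continuous_det.comp_continuousOn
          (((hkkt.fderiv_of_isOpen hO htop').continuousOn).mono hWsubO)
      · exact isOpen_ball.preimage continuous_fst
      · exact isOpen_compl_singleton
    · exact isOpen_lt continuous_const (continuous_snd.snd)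
  have hx0W : x0 ∈ W := by
    refine ⟨⟨mem_ball_self hρpos, hdet0⟩, hmupos⟩
  set V : Set ((Fin d → ℝ) × ℝ × ℝ) := P.target ∩ P.symm ⁻¹' W with hVdef
  have hVopen : IsOpen V := by
    apply ContinuousOn.isOpen_inter_preimage ?_ P.open_target hWopen
    have := P.symm.continuousOn
    rwa [P.symm_source] at this
  have hy0V : ((p0, (1:ℝ), (0:ℝ)) : (Fin d → ℝ) × ℝ × ℝ) ∈ V := by
    rw [← hy0]
    exact ⟨hy0tgt, by simp only [Set.mem_preimage]; rw [hsymmx0]; exact hx0W⟩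
  -- choose ζ
  obtain ⟨ζ1, hζ1pos, hζ1⟩ := Metric.isOpen_iff.mp hVopen _ hy0V
  obtain ⟨ζ2, hζ2pos, hζ2⟩ := Metric.isOpen_iff.mp (hΓclosed.isOpen_compl) p0 hp0notin
  set ζ := min ζ1 ζ2 with hζdef
  have hζpos : 0 < ζ := lt_min hζ1pos hζ2pos
  have hballV : ∀ q ∈ Metric.ball p0 ζ, ((q, (1:ℝ), (0:ℝ)) : (Fin d → ℝ) × ℝ × ℝ) ∈ V := by
    intro q hq
    apply hζ1
    rw [Metric.mem_ball] at hq ⊢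
    rw [Prod.dist_eq, Prod.dist_eq]
    simp only [dist_self]
    calc max (dist q p0) (max 0 0) = dist q p0 := by
          rw [max_self]
          exact max_eq_left dist_nonneg
      _ < ζ1 := lt_of_lt_of_le hq (min_le_left _ _)
  set gm : (Fin d → ℝ) → (Fin d → ℝ) := fun q => (P.symm (q, (1:ℝ), (0:ℝ))).1 with hgmdef
  set lamm : (Fin d → ℝ) → ℝ := fun q => (P.symm (q, (1:ℝ), (0:ℝ))).2.1 with hlammdef
  set mum : (Fin d → ℝ) → ℝ := fun q => (P.symm (q, (1:ℝ), (0:ℝ))).2.2 with hmumdef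
  -- facts for q in the ball
  have hfacts : ∀ q ∈ Metric.ball p0 ζ,
      (∀ i, c0 / 2 < gm q i) ∧ (∑ i, gm q i = 1) ∧ (F (gm q) = 0) ∧ (0 < mum q) ∧
      (∀ i, q i = lamm q * gm q i + mum q * gm q i * fderiv ℝ F (gm q) (Pi.single i 1)) ∧
      (gm q ∈ Metric.ball γ' η) ∧ ContDiffAt ℝ (⊤:ℕ∞) gm q := by
    intro q hq
    obtain ⟨hyt, hxw⟩ := hballV q hq
    rw [Set.mem_preimage] at hxw
    obtain ⟨⟨hxball, hxdet⟩, hxmu⟩ := hxw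
    have hks : kktMap F (P.symm ((q, (1:ℝ), (0:ℝ)) : (Fin d → ℝ) × ℝ × ℝ)) = (q, 1, 0) :=
      hrinv _ hyt
    have hsum1 : ∑ i, gm q i = 1 := congrArg (fun z : (Fin d → ℝ) × ℝ × ℝ => z.2.1) hks
    have hF0 : F (gm q) = 0 := congrArg (fun z : (Fin d → ℝ) × ℝ × ℝ => z.2.2) hks
    have hstatq : ∀ i, q i = lamm q * gm q i + mum q * gm q i
        * fderiv ℝ F (gm q) (Pi.single i 1) := by
      intro i
      exact (congrArg (fun z : (Fin d → ℝ) × ℝ × ℝ => z.1 i) hks).symm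
    have hgball : gm q ∈ Metric.ball γ' η := Metric.ball_subset_ball hρη.le hxball
    have hgpos : ∀ i, c0 / 2 < gm q i := by
      intro i
      have hd2 : dist (gm q i) (γ' i) ≤ dist (P.symm ((q, (1:ℝ), (0:ℝ)) :
          (Fin d → ℝ) × ℝ × ℝ)).1 γ' := dist_le_pi_dist _ _ i
      have hd3 : dist (gm q i) (γ' i) < ρ := lt_of_le_of_lt hd2 (Metric.mem_ball.mp hxball)
      rw [Real.dist_eq, abs_lt] at hd3
      have h4 := hΓpos γ' hγ'memΓ i
      linarith [hd3.1, hρc0]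
    have hxO : (P.symm ((q, (1:ℝ), (0:ℝ)) : (Fin d → ℝ) × ℝ × ℝ)) ∈ O := hWsubO hxball
    have hkx : ContDiffAt ℝ (⊤:ℕ∞) (kktMap F)
        (P.symm ((q, (1:ℝ), (0:ℝ)) : (Fin d → ℝ) × ℝ × ℝ)) :=
      hkkt.contDiffAt (hO.mem_nhds hxO)
    have hxdet' : (fderiv ℝ (kktMap F)
        (P.symm ((q, (1:ℝ), (0:ℝ)) : (Fin d → ℝ) × ℝ × ℝ))).det ≠ 0 := by
      simpa using hxdet
    set e := ContinuousLinearMap.toContinuousLinearEquivOfDetNeZero _ hxdet' with hedef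
    have hfd : HasFDerivAt (kktMap F)
        (e : ((Fin d → ℝ) × ℝ × ℝ) →L[ℝ] ((Fin d → ℝ) × ℝ × ℝ))
        (P.symm ((q, (1:ℝ), (0:ℝ)) : (Fin d → ℝ) × ℝ × ℝ)) := by
      rw [hedef, ContinuousLinearMap.coe_toContinuousLinearEquivOfDetNeZero]
      exact (hkx.differentiableAt (by simp)).hasFDerivAt
    have hsymm_smooth : ContDiffAt ℝ (⊤:ℕ∞) P.symm
        ((q, (1:ℝ), (0:ℝ)) : (Fin d → ℝ) × ℝ × ℝ) := by
      apply P.contDiffAt_symm hyt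
      · rw [hPcoe]
        exact hfd
      · rw [hPcoe]
        exact hkx
    have hgsm : ContDiffAt ℝ (⊤:ℕ∞) gm q := by
      have hι : ContDiffAt ℝ (⊤:ℕ∞) (fun q' : Fin d → ℝ =>
          ((q', (1:ℝ), (0:ℝ)) : (Fin d → ℝ) × ℝ × ℝ)) q :=
        (contDiff_id.prodMk contDiff_const).contDiffAt
      have h2 : ContDiffAt ℝ (⊤:ℕ∞) (fun q' : Fin d → ℝ =>
          P.symm ((q', (1:ℝ), (0:ℝ)) : (Fin d → ℝ) × ℝ × ℝ)) q := hsymm_smooth.comp q hι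
      exact (contDiff_fst.contDiffAt).comp q h2
    exact ⟨hgpos, hsum1, hF0, hxmu, hstatq, hgball, hgsm⟩
  refine ⟨ζ, hζpos, gm, ?_, ?_, ?_, ?_⟩
  · -- smoothness
    intro q hq
    exact ((hfacts q hq).2.2.2.2.2.2).contDiffWithinAt
  · -- not in Γ
    intro q hq
    have : q ∈ Metric.ball p0 ζ2 :=
      Metric.ball_subset_ball (min_le_right _ _) hq.1
    exact hζ2 this
  · -- minimizer
    intro q hq
    obtain ⟨hq1, hq2⟩ := hq
    obtain ⟨hgpos, hsum1, hF0, hmuq, hstatq, hgball, _⟩ := hfacts q hq1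
    have hgpos' : ∀ i, 0 < gm q i := fun i => lt_trans (by linarith) (hgpos i)
    have hgΓ : gm q ∈ Γ := by
      rw [hΓ]
      exact ⟨⟨fun i => (hgpos' i).le, hsum1⟩, le_of_eq hF0⟩
    refine ⟨hgΓ, ?_⟩
    rw [isMinOn_iff]
    intro γ hγmem
    show ∑ i, q i * Real.log (p0 i / gm q i) ≤ ∑ i, q i * Real.log (p0 i / γ i)
    have hγsim : γ ∈ stdSimplex ℝ (Fin d) := by have h := hγmem; rw [hΓ] at h; exact h.1
    have hγle : F γ ≤ 0 := by have h := hγmem; rw [hΓ] at h; exact h.2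
    have hγpos : ∀ i, 0 < γ i := fun i => lt_of_lt_of_le hc0 (hΓpos γ hγmem i)
    set L := fderiv ℝ F (gm q) with hLdef
    have hFdg : HasFDerivAt F L (gm q) :=
      ((hFsmooth.contDiffAt (isOpen_ball.mem_nhds hgball)).differentiableAt (by simp)).hasFDerivAt
    have hqnn : ∀ i, 0 ≤ q i := hq2.1
    have hratio : ∀ i, q i / gm q i = lamm q + mum q * L (Pi.single i 1) := by
      intro i
      rw [div_eq_iff (hgpos' i).ne']
      conv_lhs => rw [hstatq i]
      ring
    have h1 : ∀ i ∈ Finset.univ, q i / gm q i * (gm q i - γ i)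
        ≤ q i * Real.log (p0 i / γ i) - q i * Real.log (p0 i / gm q i) := by
      intro i _
      have hlog : Real.log (γ i / gm q i) ≤ γ i / gm q i - 1 :=
        Real.log_le_sub_one_of_pos (div_pos (hγpos i) (hgpos' i))
      rw [Real.log_div (hγpos i).ne' (hgpos' i).ne'] at hlog
      rw [Real.log_div (hp0pos i).ne' (hγpos i).ne',
        Real.log_div (hp0pos i).ne' (hgpos' i).ne']
      have h2 : q i / gm q i * (gm q i - γ i) = q i * (1 - γ i / gm q i) := by
        field_simp [(hgpos' i).ne']
      rw [h2]
      have h3 : 1 - γ i / gm q i ≤ Real.log (gm q i) - Real.log (γ i) := by linarith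
      have h4 := mul_le_mul_of_nonneg_left h3 (hqnn i)
      linarith
    have hexp : L (gm q - γ) = ∑ j, (gm q j - γ j) * L (Pi.single j 1) := by
      rw [clm_sum_single L (gm q - γ)]
      exact Finset.sum_congr rfl (fun j _ => by rw [Pi.sub_apply])
    have hLsum : ∑ i, q i / gm q i * (gm q i - γ i) = mum q * L (gm q - γ) := by
      have h3 : ∀ i ∈ Finset.univ, q i / gm q i * (gm q i - γ i)
          = lamm q * (gm q i - γ i) + mum q * ((gm q i - γ i) * L (Pi.single i 1)) := by
        intro i _
        rw [hratio i]
        ring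
      rw [Finset.sum_congr rfl h3, Finset.sum_add_distrib, ← Finset.mul_sum, ← Finset.mul_sum]
      have hzero : ∑ i, (gm q i - γ i) = 0 := by
        rw [Finset.sum_sub_distrib, hsum1, hγsim.2]; ring
      rw [hzero, hexp]
      ring
    have hLnn : 0 ≤ L (gm q - γ) := by
      have hub := convexOn_grad_le hFconv hFdg (γ - gm q)
      rw [show gm q + (γ - gm q) = γ by ring, hF0] at hub
      have hneg : L (gm q - γ) = - L (γ - gm q) := by
        rw [show gm q - γ = -(γ - gm q) by ring, map_neg]
      rw [hneg]
      linarith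
    have hfinal : 0 ≤ ∑ i, (q i * Real.log (p0 i / γ i) - q i * Real.log (p0 i / gm q i)) :=
      calc (0:ℝ) ≤ mum q * L (gm q - γ) := mul_nonneg hmuq.le hLnn
        _ = ∑ i, q i / gm q i * (gm q i - γ i) := hLsum.symm
        _ ≤ _ := Finset.sum_le_sum h1
    rw [Finset.sum_sub_distrib] at hfinal
    linarith
  · -- derivative identity
    intro q hq i
    obtain ⟨hq1, hq2⟩ := hq
    obtain ⟨hgpos, hsum1, hF0, hmuq, hstatq, hgball, hgsm⟩ := hfacts q hq1
    have hgpos' : ∀ j, 0 < gm q j := fun j => lt_trans (by linarith) (hgpos j)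
    set L := fderiv ℝ F (gm q) with hLdef
    have hFdg : HasFDerivAt F L (gm q) :=
      ((hFsmooth.contDiffAt (isOpen_ball.mem_nhds hgball)).differentiableAt (by simp)).hasFDerivAt
    have hgdiff : DifferentiableAt ℝ gm q := hgsm.differentiableAt (by simp)
    set Dg := fderiv ℝ gm q with hDgdef
    have hDgj : ∀ j : Fin d, HasFDerivAt (fun q' => gm q' j)
        ((ContinuousLinearMap.proj j : (Fin d → ℝ) →L[ℝ] ℝ).comp Dg) q := by
      intro j
      exact (ContinuousLinearMap.proj j :
        (Fin d → ℝ) →L[ℝ] ℝ).hasFDerivAt.comp q hgdiff.hasFDerivAt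
    have hwj : ∀ j, fderiv ℝ (fun q' => gm q' j) q (Pi.single i 1)
        = Dg (Pi.single i 1) j := by
      intro j
      rw [(hDgj j).fderiv, ContinuousLinearMap.comp_apply, ContinuousLinearMap.proj_apply]
    have hSd : HasFDerivAt (fun q' => ∑ j, gm q' j)
        (∑ j, (ContinuousLinearMap.proj j : (Fin d → ℝ) →L[ℝ] ℝ).comp Dg) q :=
      HasFDerivAt.fun_sum (fun j _ => hDgj j)
    have hS0 : HasFDerivAt (fun q' => ∑ j, gm q' j) (0 : (Fin d → ℝ) →L[ℝ] ℝ) q := by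
      apply (hasFDerivAt_const (1:ℝ) q).congr_of_eventuallyEq
      filter_upwards [isOpen_ball.mem_nhds hq1] with q' hq'
      exact (hfacts q' hq').2.1
    have hsumv : ∑ j, Dg (Pi.single i 1) j = 0 := by
      have huniq := hSd.unique hS0
      have happ := congrArg (fun T : (Fin d → ℝ) →L[ℝ] ℝ => T (Pi.single i 1)) huniq
      simpa [ContinuousLinearMap.sum_apply, ContinuousLinearMap.comp_apply,
        ContinuousLinearMap.proj_apply, ContinuousLinearMap.zero_apply] using happ
    have hFdh : HasFDerivAt (fun q' => F (gm q')) (L.comp Dg) q :=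
      hFdg.comp q hgdiff.hasFDerivAt
    have hF0' : HasFDerivAt (fun q' => F (gm q')) (0 : (Fin d → ℝ) →L[ℝ] ℝ) q := by
      apply (hasFDerivAt_const (0:ℝ) q).congr_of_eventuallyEq
      filter_upwards [isOpen_ball.mem_nhds hq1] with q' hq'
      exact (hfacts q' hq').2.2.1
    have hLv : ∑ j, Dg (Pi.single i 1) j * L (Pi.single j 1) = 0 := by
      have huniq := hFdh.unique hF0'
      have happ := congrArg (fun T : (Fin d → ℝ) →L[ℝ] ℝ => T (Pi.single i 1)) huniq
      have h2 : L (Dg (Pi.single i 1)) = 0 := by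
        simpa [ContinuousLinearMap.comp_apply, ContinuousLinearMap.zero_apply] using happ
      rw [clm_sum_single L (Dg (Pi.single i 1))] at h2
      exact h2
    have hratio : ∀ j, q j / gm q j = lamm q + mum q * L (Pi.single j 1) := by
      intro j
      rw [div_eq_iff (hgpos' j).ne']
      conv_lhs => rw [hstatq j]
      ring
    calc ∑ j, (q j / gm q j) * fderiv ℝ (fun q' => gm q' j) q (Pi.single i 1)
        = ∑ j, (lamm q * Dg (Pi.single i 1) j
          + mum q * (Dg (Pi.single i 1) j * L (Pi.single j 1))) := by
          apply Finset.sum_congr rfl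
          intro j _
          rw [hwj j, hratio j]
          ring
      _ = lamm q * ∑ j, Dg (Pi.single i 1) j
          + mum q * ∑ j, Dg (Pi.single i 1) j * L (Pi.single j 1) := by
          rw [Finset.sum_add_distrib, Finset.mul_sum, Finset.mul_sum]
      _ = 0 := by rw [hsumv, hLv]; ring

end
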